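/- Let n ≥ 1 and 0 ≤ t < T. Let w_1,…,w_n : [t,T] → (0,∞) be continuously differentiable with ∑_{i=1}^n w_i(s) = 1 for all s ∈ [t,T], and let S_1,…,S_n : [t,T] → (0,∞) be continuously differentiable. Let V(t) > 0, define V(T) = V(t) · exp(∑_{i=1}^n ∫_t^T log(w_i(s)/S_i(s)) w_i'(s) ds), and for s ∈ {t, T} define G(s) = V(s) · ∏_{i=1}^n (S_i(s)/w_i(s))^{w_i(s)}. Then G(T) = G(t) · exp(∑_{i=1}^n ∫_t^T w_i(s) S_i'(s)/S_i(s) ds). -/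

import Mathlib

open Finset

/-- Proposition 2 (smooth-path form): the dynamic-weight G3M LP payoff satisfies
G(T) = G(t) · exp(∑_i ∫_t^T w_i d log S_i). -/
theorem stmt_11 (n : ℕ) (hn : 1 ≤ n) (t T : ℝ) (ht : 0 ≤ t) (htT : t < T)
    (w S w' S' : Fin n → ℝ → ℝ)
    (hw : ∀ i, ∀ s ∈ Set.Icc t T, HasDerivAt (w i) (w' i s) s)
    (hw'c : ∀ i, ContinuousOn (w' i) (Set.Icc t T))
    (hS : ∀ i, ∀ s ∈ Set.Icc t T, HasDerivAt (S i) (S' i s) s)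
    (hS'c : ∀ i, ContinuousOn (S' i) (Set.Icc t T))
    (hwpos : ∀ i, ∀ s ∈ Set.Icc t T, 0 < w i s)
    (hSpos : ∀ i, ∀ s ∈ Set.Icc t T, 0 < S i s)
    (hwsum : ∀ s ∈ Set.Icc t T, ∑ i, w i s = 1)
    (Vt VT Gt GT : ℝ) (hVt : 0 < Vt)
    (hVT : VT = Vt * Real.exp (∑ i, ∫ s in t..T, Real.log (w i s / S i s) * w' i s))
    (hGt : Gt = Vt * ∏ i, (S i t / w i t) ^ (w i t))
    (hGT : GT = VT * ∏ i, (S i T / w i T) ^ (w i T)) :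
    GT = Gt * Real.exp (∑ i, ∫ s in t..T, w i s * S' i s / S i s) := by
  have hsub : Set.uIcc t T = Set.Icc t T := Set.uIcc_of_le htT.le
  have htmem : t ∈ Set.Icc t T := Set.left_mem_Icc.2 htT.le
  have hTmem : T ∈ Set.Icc t T := Set.right_mem_Icc.2 htT.le
  have hwc : ∀ i, ContinuousOn (w i) (Set.Icc t T) := fun i s hs =>
    (hw i s hs).continuousAt.continuousWithinAt
  have hSc : ∀ i, ContinuousOn (S i) (Set.Icc t T) := fun i s hs =>
    (hS i s hs).continuousAt.continuousWithinAt
  have hwne : ∀ i, ∀ s ∈ Set.Icc t T, w i s ≠ 0 := fun i s hs => (hwpos i s hs).ne'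
  have hSne : ∀ i, ∀ s ∈ Set.Icc t T, S i s ≠ 0 := fun i s hs => (hSpos i s hs).ne'
  -- integrability of the pieces
  have hint1 : ∀ i, IntervalIntegrable (fun s => Real.log (w i s / S i s) * w' i s)
      MeasureTheory.volume t T := by
    intro i
    apply ContinuousOn.intervalIntegrable
    rw [hsub]
    exact (((hwc i).div (hSc i) (hSne i)).log
      (fun s hs => div_ne_zero (hwne i s hs) (hSne i s hs))).mul (hw'c i)
  have hint2 : ∀ i, IntervalIntegrable (fun s => w i s * S' i s / S i s)
      MeasureTheory.volume t T := by
    intro i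
    apply ContinuousOn.intervalIntegrable
    rw [hsub]
    exact ((hwc i).mul (hS'c i)).div (hSc i) (hSne i)
  have hint3 : ∀ i, IntervalIntegrable (w' i) MeasureTheory.volume t T := by
    intro i
    apply ContinuousOn.intervalIntegrable
    rw [hsub]; exact hw'c i
  -- FTC for w i
  have ftcw : ∀ i, ∫ s in t..T, w' i s = w i T - w i t := by
    intro i
    apply intervalIntegral.integral_eq_sub_of_hasDerivAt
    · intro s hs; exact hw i s (hsub ▸ hs)
    · exact hint3 i
  -- FTC for f_i s = w i s * (log (S i s) - log (w i s))
  have ftcf : ∀ i,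
      w i T * (Real.log (S i T) - Real.log (w i T))
        - w i t * (Real.log (S i t) - Real.log (w i t))
      = -(∫ s in t..T, Real.log (w i s / S i s) * w' i s)
        + (∫ s in t..T, w i s * S' i s / S i s) - (w i T - w i t) := by
    intro i
    have hD : ∫ s in t..T, (w' i s * (Real.log (S i s) - Real.log (w i s))
        + w i s * (S' i s / S i s - w' i s / w i s))
        = w i T * (Real.log (S i T) - Real.log (w i T))
          - w i t * (Real.log (S i t) - Real.log (w i t)) := by
      apply intervalIntegral.integral_eq_sub_of_hasDerivAt
      · intro s hs
        rw [hsub] at hs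
        exact (hw i s hs).mul
          (((hS i s hs).log (hSne i s hs)).sub ((hw i s hs).log (hwne i s hs)))
      · apply ContinuousOn.intervalIntegrable
        rw [hsub]
        exact ((hw'c i).mul (((hSc i).log (hSne i)).sub ((hwc i).log (hwne i)))).add
          ((hwc i).mul (((hS'c i).div (hSc i) (hSne i)).sub
            ((hw'c i).div (hwc i) (hwne i))))
    rw [← hD]
    have hcong : ∫ s in t..T, (w' i s * (Real.log (S i s) - Real.log (w i s))
        + w i s * (S' i s / S i s - w' i s / w i s))
        = ∫ s in t..T, (-(Real.log (w i s / S i s) * w' i s)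
          + (w i s * S' i s / S i s - w' i s)) := by
      apply intervalIntegral.integral_congr
      intro s hs
      rw [hsub] at hs
      have h1 : Real.log (w i s / S i s) = Real.log (w i s) - Real.log (S i s) :=
        Real.log_div (hwne i s hs) (hSne i s hs)
      have h2 : w i s ≠ 0 := hwne i s hs
      simp only [h1]
      field_simp
      ring
    have h4 : IntervalIntegrable (fun s => -(Real.log (w i s / S i s) * w' i s))
        MeasureTheory.volume t T := by exact (hint1 i).neg
    rw [hcong, intervalIntegral.integral_add h4 ((hint2 i).sub (hint3 i)),
      intervalIntegral.integral_sub (hint2 i) (hint3 i), ftcw i,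
      intervalIntegral.integral_neg]
    ring
  -- sum identity
  have hsum : ∑ i, Real.log (S i T / w i T) * w i T - ∑ i, Real.log (S i t / w i t) * w i t
      = -(∑ i, ∫ s in t..T, Real.log (w i s / S i s) * w' i s)
        + ∑ i, ∫ s in t..T, w i s * S' i s / S i s := by
    have e1 : ∀ i, Real.log (S i T / w i T) * w i T
        = w i T * (Real.log (S i T) - Real.log (w i T)) := fun i => by
      rw [Real.log_div (hSne i T hTmem) (hwne i T hTmem)]; ring
    have e2 : ∀ i, Real.log (S i t / w i t) * w i t
        = w i t * (Real.log (S i t) - Real.log (w i t)) := fun i => by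
      rw [Real.log_div (hSne i t htmem) (hwne i t htmem)]; ring
    simp only [e1, e2]
    rw [← Finset.sum_sub_distrib]
    have := Finset.sum_congr rfl (fun i (_ : i ∈ Finset.univ) => ftcf i)
    rw [this]
    rw [Finset.sum_sub_distrib, Finset.sum_add_distrib, Finset.sum_sub_distrib,
      hwsum T hTmem, hwsum t htmem, ← Finset.sum_neg_distrib]
    ring
  -- rewrite products via exp
  have prodT : ∏ i, (S i T / w i T) ^ (w i T)
      = Real.exp (∑ i, Real.log (S i T / w i T) * w i T) := by
    rw [Real.exp_sum]
    refine Finset.prod_congr rfl fun i _ => ?_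
    rw [Real.rpow_def_of_pos (div_pos (hSpos i T hTmem) (hwpos i T hTmem))]
  have prodt : ∏ i, (S i t / w i t) ^ (w i t)
      = Real.exp (∑ i, Real.log (S i t / w i t) * w i t) := by
    rw [Real.exp_sum]
    refine Finset.prod_congr rfl fun i _ => ?_
    rw [Real.rpow_def_of_pos (div_pos (hSpos i t htmem) (hwpos i t htmem))]
  rw [hGT, hGt, hVT, prodT, prodt, mul_assoc, mul_assoc, ← Real.exp_add, ← Real.exp_add]
  have key : (∑ i, ∫ s in t..T, Real.log (w i s / S i s) * w' i s)
      + ∑ i, Real.log (S i T / w i T) * w i T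
      = (∑ i, Real.log (S i t / w i t) * w i t)
        + ∑ i, ∫ s in t..T, w i s * S' i s / S i s := by linarith [hsum]
  rw [key]
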